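/- Let V be a finite-dimensional complex vector space with a nondegenerate symmetric bilinear form, and let A be a finite spanning set of nonzero vectors in V such that A is irreducible (i.e., A cannot be partitioned into two nonempty subsets spanning orthogonal complementary subspaces). If the operator S = Σ_{β∈A} β⊗β commutes with α⊗α for every α ∈ A, then S is a scalar multiple of the identity. -/
import Mathlib


/-- If the sum `S = Σ_{β∈A} β⊗β` commutes with every `α⊗α`, `α ∈ A`, for an irreducible
finite spanning set `A` of nonzero vectors in a complex vector space with nondegenerate
symmetric bilinear form, then `S` is a scalar multiple of the identity. -/
theorem stmt_1 (V : Type*) [AddCommGroup V] [Module ℂ V] [FiniteDimensional ℂ V] [DecidableEq V]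
    (B : V →ₗ[ℂ] V →ₗ[ℂ] ℂ) (hB : ∀ x y, B x y = B y x)
    (hnd : ∀ x, (∀ y, B x y = 0) → x = 0)
    (A : Finset V) (h0 : (0 : V) ∉ A)
    (hspan : Submodule.span ℂ (A : Set V) = ⊤)
    (hirr : ∀ A₁ A₂ : Finset V, A₁ ∪ A₂ = A → A₁.Nonempty → A₂.Nonempty →
      Disjoint A₁ A₂ → ¬ (∀ α ∈ A₁, ∀ β ∈ A₂, B α β = 0))
    (hcomm : ∀ α ∈ A, Commute ((B α).smulRight α) (∑ β ∈ A, (B β).smulRight β)) :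
    ∃ c : ℂ, (∑ β ∈ A, (B β).smulRight β) = c • (LinearMap.id : V →ₗ[ℂ] V) := by
  classical
  set S : V →ₗ[ℂ] V := ∑ β ∈ A, (B β).smulRight β with hS
  -- every α ∈ A is an eigenvector of S
  have heigen : ∀ α ∈ A, ∃ c : ℂ, S α = c • α := by
    intro α hα
    have hα0 : α ≠ 0 := fun h => h0 (h ▸ hα)
    have hex : ∃ x, B α x ≠ 0 := by
      by_contra h
      push_neg at h
      exact hα0 (hnd α h)
    obtain ⟨x, hx⟩ := hex
    have h1 : B α (S x) • α = B α x • S α := by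
      have := congrArg (fun f : V →ₗ[ℂ] V => f x) (hcomm α hα).eq
      simpa [Module.End.mul_apply, LinearMap.smulRight_apply, map_smul] using this
    refine ⟨(B α x)⁻¹ * B α (S x), ?_⟩
    have h2 : B α x • S α = B α x • (((B α x)⁻¹ * B α (S x)) • α) := by
      rw [← h1, smul_smul, mul_inv_cancel_left₀ hx]
    exact smul_right_injective V hx h2
  -- S is symmetric with respect to B
  have hSapp : ∀ x : V, S x = ∑ β ∈ A, B β x • β := by
    intro x
    simp [hS, LinearMap.sum_apply, LinearMap.smulRight_apply]
  have hsym : ∀ x y, B (S x) y = B x (S y) := by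
    intro x y
    rw [hSapp x, hSapp y, map_sum, LinearMap.sum_apply, map_sum]
    refine Finset.sum_congr rfl fun β _ => ?_
    simp only [map_smul, LinearMap.smul_apply, smul_eq_mul]
    rw [hB β x, hB x β]
    ring
  rcases A.eq_empty_or_nonempty with hA | ⟨α₀, hα₀⟩
  · exact ⟨0, by simp [hS, hA]⟩
  obtain ⟨c₀, hc₀⟩ := heigen α₀ hα₀
  have hall : ∀ α ∈ A, S α = c₀ • α := by
    by_contra h
    push_neg at h
    obtain ⟨β₁, hβ₁, hne⟩ := h
    set A₁ := A.filter (fun α => S α = c₀ • α) with hA₁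
    set A₂ := A.filter (fun α => ¬ (S α = c₀ • α)) with hA₂
    have hunion : A₁ ∪ A₂ = A := Finset.filter_union_filter_not_eq _ A
    have hdisj : Disjoint A₁ A₂ := Finset.disjoint_filter_filter_not A A _
    have hn1 : A₁.Nonempty := ⟨α₀, Finset.mem_filter.mpr ⟨hα₀, hc₀⟩⟩
    have hn2 : A₂.Nonempty := ⟨β₁, Finset.mem_filter.mpr ⟨hβ₁, hne⟩⟩
    apply hirr A₁ A₂ hunion hn1 hn2 hdisj
    intro α hα β hβ
    obtain ⟨hαA, hαeq⟩ := Finset.mem_filter.mp hα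
    obtain ⟨hβA, hβne⟩ := Finset.mem_filter.mp hβ
    obtain ⟨cβ, hcβ⟩ := heigen β hβA
    have hcne : cβ ≠ c₀ := fun h => hβne (h ▸ hcβ)
    have hkey := hsym α β
    rw [hαeq, hcβ, map_smul, map_smul] at hkey
    simp only [LinearMap.smul_apply, smul_eq_mul] at hkey
    have hz : (c₀ - cβ) * B α β = 0 := by rw [sub_mul, hkey, sub_self]
    exact (mul_eq_zero.mp hz).resolve_left (sub_ne_zero.mpr (fun h => hcne h.symm))
  refine ⟨c₀, ?_⟩
  apply LinearMap.ext_on hspan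
  intro x hx
  simpa using hall x hx
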